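/- The minimum of Σ_j C_j over all schedules of n given jobs on m uniform machines equals Σ_{k=1}^{n} ω_{(k)}·p_{(k)}, where ω_{(1)} ≤ ω_{(2)} ≤ … ≤ ω_{(n)} are the n smallest elements of the multiset { ℓ/V_i : 1 ≤ i ≤ m, 1 ≤ ℓ ≤ n } and p_{(1)} ≥ p_{(2)} ≥ … ≥ p_{(n)} are the processing times of the n jobs sorted in non-increasing order; moreover this minimum is attained by any schedule that assigns the job with the k-th largest processing time to a position whose positional weight is ω_{(k)}, for every k. -/

import Mathlib

/-- A schedule of a finite set of jobs `J` on `m` uniform machines: each job gets a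
machine and a (1-based) position, positions on each machine are pairwise distinct and
the occupied positions on each machine are exactly `1, …, η_i`. -/
structure Schedule (J : Type) (m : ℕ) where
  mach : J → Fin m
  pos : J → ℕ
  pos_pos : ∀ j, 1 ≤ pos j
  inj : ∀ j j', mach j = mach j' → pos j = pos j' → j = j'
  contiguous : ∀ j, 2 ≤ pos j → ∃ j', mach j' = mach j ∧ pos j' = pos j - 1

namespace Schedule

variable {J : Type} {m : ℕ} [Fintype J]

/-- Number `η_i` of jobs scheduled on machine `i`. -/
def load (σ : Schedule J m) (i : Fin m) : ℕ :=
  (Finset.univ.filter fun j => σ.mach j = i).card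

/-- Completion time of job `j`: jobs on a machine of speed `V i` are processed
consecutively from time 0 without idle time. -/
noncomputable def compl (σ : Schedule J m) (p : J → ℝ) (V : Fin m → ℝ) (j : J) : ℝ :=
  (∑ j' ∈ Finset.univ.filter
      (fun j' => σ.mach j' = σ.mach j ∧ σ.pos j' ≤ σ.pos j), p j') / V (σ.mach j)

/-- Total completion time `Σ_j C_j` of a schedule. -/
noncomputable def totalC (σ : Schedule J m) (p : J → ℝ) (V : Fin m → ℝ) : ℝ :=
  ∑ j, σ.compl p V j

/-- Positional weight of job `j`: `(η_i + 1 - k)/V_i` where `k` is the position of `j`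
on its machine `M_i`, which holds `η_i` jobs. -/
noncomputable def pw (σ : Schedule J m) (V : Fin m → ℝ) (j : J) : ℝ :=
  ((σ.load (σ.mach j) : ℝ) + 1 - (σ.pos j : ℝ)) / V (σ.mach j)

end Schedule


section Aux
open Finset




/-- A downward-closed finite set of naturals is an initial segment. -/
lemma downward_eq_range (S : Finset ℕ) (h : ∀ k ∈ S, ∀ l < k, l ∈ S) :
    S = Finset.range S.card := by
  rcases S.eq_empty_or_nonempty with rfl | hne
  · simp
  · have ht := S.max'_mem hne
    have hS : S = Finset.range (S.max' hne + 1) := by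
      apply Finset.Subset.antisymm
      · intro x hx
        simp only [Finset.mem_range]
        exact Nat.lt_succ_of_le (S.le_max' x hx)
      · intro x hx
        simp only [Finset.mem_range, Nat.lt_succ_iff] at hx
        rcases eq_or_lt_of_le hx with rfl | hlt
        · exact ht
        · exact h _ ht _ hlt
    rw [hS, Finset.card_range]

/-- A finite set of positive naturals closed under predecessor is `Icc 1 card`. -/
lemma pred_closed_eq_Icc (S : Finset ℕ) (h1 : ∀ k ∈ S, 1 ≤ k)
    (h : ∀ k ∈ S, 2 ≤ k → k - 1 ∈ S) : S = Finset.Icc 1 S.card := by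
  have hdc : ∀ d k, k ∈ S → ∀ l, 1 ≤ l → l + d = k → l ∈ S := by
    intro d
    induction d with
    | zero => intro k hk l _ hl; simpa [show l = k by omega] using hk
    | succ d ih =>
      intro k hk l hl hlk
      have h2 : 2 ≤ k := by omega
      exact ih (k - 1) (h k hk h2) l hl (by omega)
  rcases S.eq_empty_or_nonempty with rfl | hne
  · simp
  · have ht := S.max'_mem hne
    have hS : S = Finset.Icc 1 (S.max' hne) := by
      apply Finset.Subset.antisymm
      · intro x hx
        simp only [Finset.mem_Icc]
        exact ⟨h1 x hx, S.le_max' x hx⟩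
      · intro x hx
        simp only [Finset.mem_Icc] at hx
        exact hdc (S.max' hne - x) _ ht x hx.1 (by omega)
    have hc : S.card = S.max' hne := by
      have := congrArg Finset.card hS
      simpa [Nat.card_Icc] using this
    rw [hc, ← hS]


lemma cons_getD_le {a : ℝ} {l : List ℝ} (hs : (a :: l).Pairwise (· ≤ ·)) {i : ℕ}
    (hi : i < l.length) : (a :: l).getD i 0 ≤ l.getD i 0 := by
  cases i with
  | zero =>
    rw [List.getD_eq_getElem _ _ (by simp), List.getD_eq_getElem _ _ hi]
    simp only [List.getElem_cons_zero]
    exact (List.pairwise_cons.mp hs).1 _ (l.getElem_mem hi)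
  | succ j =>
    rw [List.getD_eq_getElem _ _ (by simp; omega), List.getD_eq_getElem _ _ hi]
    have := (List.pairwise_cons.mp hs).2.rel_get_of_lt
      (a := ⟨j, by omega⟩) (b := ⟨j + 1, hi⟩) (by simp)
    simpa using this

lemma getD_le_of_sublist {l l' : List ℝ} (h : l.Sublist l') (hs : l'.Pairwise (· ≤ ·)) :
    ∀ i < l.length, l'.getD i 0 ≤ l.getD i 0 := by
  induction h with
  | slnil => intro i hi; simp at hi
  | @cons l₁ l₂ a h ih =>
    intro i hi
    have h1 : i < l₂.length := lt_of_lt_of_le hi h.length_le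
    exact le_trans (cons_getD_le hs h1) (ih (List.pairwise_cons.mp hs).2 i hi)
  | @cons_cons l₁ l₂ a h ih =>
    intro i hi
    cases i with
    | zero => simp
    | succ j =>
      simp only [List.getD_cons_succ]
      exact ih (List.pairwise_cons.mp hs).2 j (by simpa using hi)




lemma univ_val_map_equiv {α β γ : Type*} [Fintype α] [Fintype β] (e : α ≃ β) (f : β → γ) :
    (Finset.univ : Finset α).val.map (f ∘ e) = (Finset.univ : Finset β).val.map f := by
  have h1 : (Finset.univ : Finset α).val.map (⇑e) = (Finset.univ : Finset β).val := by
    have := Finset.map_univ_equiv e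
    calc (Finset.univ : Finset α).val.map (⇑e) = (Finset.univ.map e.toEmbedding).val := by
          rw [Finset.map_val]; rfl
      _ = (Finset.univ : Finset β).val := by rw [this]
  calc (Finset.univ : Finset α).val.map (f ∘ e) = ((Finset.univ : Finset α).val.map ⇑e).map f := by
        rw [Multiset.map_map]
    _ = (Finset.univ : Finset β).val.map f := by rw [h1]

lemma sort_eq_ofFn {n : ℕ} (f : Fin n → ℝ) :
    ((Finset.univ.val.map f).sort (· ≤ ·)) = List.ofFn (f ∘ Tuple.sort f) := by
  apply List.Perm.eq_of_pairwise' (r := (· ≤ ·))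
  rotate_right
  · rw [← Multiset.coe_eq_coe, Multiset.sort_eq, List.ofFn_eq_map]
    have : ((List.finRange n).map (f ∘ ⇑(Tuple.sort f)) : Multiset ℝ)
        = Finset.univ.val.map (f ∘ ⇑(Tuple.sort f)) := rfl
    rw [this, univ_val_map_equiv]
  · exact Multiset.pairwise_sort _ _
  · exact (List.sortedLE_ofFn_iff.mpr (Tuple.monotone_sort f)).pairwise

lemma sort_getD {n : ℕ} (f : Fin n → ℝ) (k : Fin n) :
    ((Finset.univ.val.map f).sort (· ≤ ·)).getD k 0 = f (Tuple.sort f k) := by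
  rw [sort_eq_ofFn, List.getD_eq_getElem _ _ (by simp), List.getElem_ofFn]
  simp

lemma sort_length {n : ℕ} (f : Fin n → ℝ) :
    ((Finset.univ.val.map f).sort (· ≤ ·)).length = n := by
  simp [Multiset.length_sort]
namespace Schedule
variable {J : Type} {m : ℕ} [Fintype J]
variable [DecidableEq J]
set_option linter.unusedSectionVars false


lemma pos_injOn (σ : Schedule J m) (i : Fin m) :
    Set.InjOn σ.pos (Finset.univ.filter fun j => σ.mach j = i) := by
  intro a ha b hb hab
  simp only [coe_filter, Set.mem_setOf_eq] at ha hb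
  exact σ.inj a b (ha.2.trans hb.2.symm) hab

lemma pos_image (σ : Schedule J m) (i : Fin m) :
    (Finset.univ.filter fun j => σ.mach j = i).image σ.pos = Finset.Icc 1 (σ.load i) := by
  have hcard : ((Finset.univ.filter fun j => σ.mach j = i).image σ.pos).card = σ.load i :=
    Finset.card_image_of_injOn (σ.pos_injOn i)
  rw [← hcard]
  apply pred_closed_eq_Icc
  · intro k hk
    simp only [mem_image, mem_filter] at hk
    obtain ⟨j, _, rfl⟩ := hk
    exact σ.pos_pos j
  · intro k hk h2
    simp only [mem_image, mem_filter] at hk ⊢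
    obtain ⟨j, ⟨_, hj⟩, rfl⟩ := hk
    obtain ⟨j', hj'1, hj'2⟩ := σ.contiguous j h2
    exact ⟨j', ⟨mem_univ _, hj'1.trans hj⟩, hj'2⟩

lemma pos_mem_Icc (σ : Schedule J m) (j : J) : σ.pos j ∈ Finset.Icc 1 (σ.load (σ.mach j)) := by
  rw [← σ.pos_image (σ.mach j)]
  exact Finset.mem_image_of_mem _ (by simp)

lemma card_tail (σ : Schedule J m) (i : Fin m) (k : ℕ) (hk : k ∈ Finset.Icc 1 (σ.load i)) :
    (Finset.univ.filter fun j => σ.mach j = i ∧ k ≤ σ.pos j).card = σ.load i + 1 - k := by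
  have h1 : (Finset.univ.filter fun j => σ.mach j = i ∧ k ≤ σ.pos j)
      = (Finset.univ.filter fun j => σ.mach j = i).filter (fun j => k ≤ σ.pos j) := by
    rw [Finset.filter_filter]
  have h2 : ((Finset.univ.filter fun j => σ.mach j = i).filter (fun j => k ≤ σ.pos j)).card
      = (((Finset.univ.filter fun j => σ.mach j = i).filter
          (fun j => k ≤ σ.pos j)).image σ.pos).card := by
    rw [Finset.card_image_of_injOn]
    exact (σ.pos_injOn i).mono (by intro x hx; simpa using (Finset.mem_filter.mp hx).1)
  have h3 : ((Finset.univ.filter fun j => σ.mach j = i).filter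
        (fun j => k ≤ σ.pos j)).image σ.pos
      = ((Finset.univ.filter fun j => σ.mach j = i).image σ.pos).filter (fun x => k ≤ x) := by
    ext x
    simp only [mem_image, mem_filter, mem_univ, true_and]
    constructor
    · rintro ⟨j, ⟨hj1, hj2⟩, rfl⟩; exact ⟨⟨j, hj1, rfl⟩, hj2⟩
    · rintro ⟨⟨j, hj1, rfl⟩, hj2⟩; exact ⟨j, ⟨hj1, hj2⟩, rfl⟩
  rw [h1, h2, h3, σ.pos_image i]
  have h4 : (Finset.Icc 1 (σ.load i)).filter (fun x => k ≤ x) = Finset.Icc k (σ.load i) := by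
    have hk' := Finset.mem_Icc.mp hk
    ext x
    simp only [mem_filter, mem_Icc]
    omega
  rw [h4, Nat.card_Icc]

lemma totalC_eq_sum_pw (σ : Schedule J m) (p : J → ℝ) (V : Fin m → ℝ) :
    σ.totalC p V = ∑ j, σ.pw V j * p j := by
  have hcompl : ∀ j, σ.compl p V j = ∑ j' ∈ Finset.univ.filter
      (fun j' => σ.mach j' = σ.mach j ∧ σ.pos j' ≤ σ.pos j), p j' / V (σ.mach j') := by
    intro j
    rw [compl, Finset.sum_div]
    apply Finset.sum_congr rfl
    intro j' hj'
    simp only [mem_filter] at hj'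
    rw [hj'.2.1]
  rw [totalC]
  simp_rw [hcompl]
  rw [Finset.sum_comm' (t' := Finset.univ)
    (s' := fun j' => Finset.univ.filter fun j => σ.mach j' = σ.mach j ∧ σ.pos j' ≤ σ.pos j)]
  · apply Finset.sum_congr rfl
    intro j' _
    rw [Finset.sum_const]
    have hfilter : (Finset.univ.filter fun j => σ.mach j' = σ.mach j ∧ σ.pos j' ≤ σ.pos j)
        = Finset.univ.filter fun j => σ.mach j = σ.mach j' ∧ σ.pos j' ≤ σ.pos j := by
      apply Finset.filter_congr; intro x _; simp [eq_comm]
    rw [hfilter, σ.card_tail (σ.mach j') (σ.pos j') (σ.pos_mem_Icc j')]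
    have hmem := σ.pos_mem_Icc j'
    simp only [mem_Icc] at hmem
    rw [pw]
    have hcast : ((σ.load (σ.mach j') + 1 - σ.pos j' : ℕ) : ℝ)
        = (σ.load (σ.mach j') : ℝ) + 1 - (σ.pos j' : ℝ) := by
      push_cast [Nat.cast_sub (by omega : σ.pos j' ≤ σ.load (σ.mach j') + 1)]
      ring
    rw [nsmul_eq_mul, hcast]
    ring
  · intro x y
    simp only [mem_filter, mem_univ, true_and]
    tauto

end Schedule

end Aux

/-- The `n` smallest elements (in non-decreasing order) of the multiset
`{ ℓ/V_i : 1 ≤ i ≤ m, 1 ≤ ℓ ≤ n }` of positional weights. -/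
noncomputable def sortedWeights (m n : ℕ) (V : Fin m → ℝ) : List ℝ :=
  (((Finset.univ : Finset (Fin m × Fin n)).val.map
      (fun q => (((q.2 : ℕ) : ℝ) + 1) / V q.1)).sort (· ≤ ·)).take n

/-- The processing times sorted in non-increasing order. -/
noncomputable def sortedProcDesc {n : ℕ} (p : Fin n → ℝ) : List ℝ :=
  (((Finset.univ : Finset (Fin n)).val.map p).sort (· ≤ ·)).reverse


section Main
open Finset

variable {m n : ℕ}

/-- The full multiset of positional weights as a function on pairs. -/
noncomputable def weightfn (m n : ℕ) (V : Fin m → ℝ) : Fin m × Fin n → ℝ :=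
  fun q => (((q.2 : ℕ) : ℝ) + 1) / V q.1

/-- The full multiset of positional weights reindexed by `Fin (m*n)`. -/
noncomputable def wtfn (m n : ℕ) (V : Fin m → ℝ) : Fin (m * n) → ℝ :=
  fun x => weightfn m n V (finProdFinEquiv.symm x)

lemma getD_take {l : List ℝ} {nn k : ℕ} (hk : k < nn) :
    (l.take nn).getD k 0 = l.getD k 0 := by
  by_cases h : k < l.length
  · have h2 : k < (l.take nn).length := by simp [List.length_take]; omega
    rw [List.getD_eq_getElem _ _ h2, List.getD_eq_getElem _ _ h, List.getElem_take]
  · rw [List.getD_eq_default _ _ (by simp [List.length_take]; omega),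
      List.getD_eq_default _ _ (by omega)]

lemma map_weightfn_eq (V : Fin m → ℝ) :
    (Finset.univ : Finset (Fin m × Fin n)).val.map (weightfn m n V)
      = (Finset.univ : Finset (Fin (m * n))).val.map (wtfn m n V) := by
  rw [← univ_val_map_equiv (finProdFinEquiv : Fin m × Fin n ≃ Fin (m * n)) (wtfn m n V)]
  congr 1
  funext q
  simp [wtfn, Equiv.symm_apply_apply]

lemma sortedWeights_getD_eq (V : Fin m → ℝ) (k : Fin n) :
    (sortedWeights m n V).getD k 0
      = (((Finset.univ : Finset (Fin m × Fin n)).val.map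
          (weightfn m n V)).sort (· ≤ ·)).getD k 0 := by
  rw [sortedWeights]
  exact getD_take k.isLt

lemma sortedWeights_getD_wt (V : Fin m → ℝ) (hm : 0 < m) (k : Fin n) :
    (sortedWeights m n V).getD k 0
      = wtfn m n V (Tuple.sort (wtfn m n V) (Fin.castLE (Nat.le_mul_of_pos_left n hm) k)) := by
  rw [sortedWeights_getD_eq, map_weightfn_eq]
  exact sort_getD (wtfn m n V) (Fin.castLE (Nat.le_mul_of_pos_left n hm) k)

lemma sortedProcDesc_getD (p : Fin n → ℝ) (k : Fin n) :
    (sortedProcDesc p).getD k 0 = p (Tuple.sort p (Fin.rev k)) := by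
  rw [sortedProcDesc]
  have hlen : ((Finset.univ.val.map p).sort (· ≤ ·)).length = n := sort_length p
  rw [List.getD_eq_getElem _ _ (by simp [List.length_reverse, hlen]),
    List.getElem_reverse]
  have : ((Finset.univ.val.map p).sort (· ≤ ·)).length - 1 - (k : ℕ) = ((Fin.rev k : Fin n) : ℕ) := by
    rw [hlen, Fin.val_rev]; omega
  rw [← List.getD_eq_getElem _ 0, this]
  exact sort_getD p (Fin.rev k)

lemma pw_mult_le (σ : Schedule (Fin n) m) (V : Fin m → ℝ) :
    Finset.univ.val.map (σ.pw V)
      ≤ (Finset.univ : Finset (Fin m × Fin n)).val.map (weightfn m n V) := by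
  have hload_le : ∀ i, σ.load i ≤ n := by
    intro i
    rw [Schedule.load]
    simpa using Finset.card_filter_le (Finset.univ : Finset (Fin n)) _
  have hpos : ∀ j : Fin n, 1 ≤ σ.pos j ∧ σ.pos j ≤ σ.load (σ.mach j) := by
    intro j
    have := σ.pos_mem_Icc j
    simpa using this
  have hlt : ∀ j : Fin n, σ.load (σ.mach j) - σ.pos j < n := by
    intro j
    have h1 := hpos j
    have h2 := hload_le (σ.mach j)
    omega
  set g : Fin n → Fin m × Fin n := fun j => (σ.mach j, ⟨σ.load (σ.mach j) - σ.pos j, hlt j⟩)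
    with hg
  have hginj : Function.Injective g := by
    intro a b hab
    rw [hg] at hab
    simp only [Prod.mk.injEq, Fin.mk.injEq] at hab
    obtain ⟨hmeq, hsubeq⟩ := hab
    have ha := hpos a; have hb := hpos b
    apply σ.inj a b hmeq
    rw [hmeq] at ha hsubeq
    omega
  have hwg : ∀ j, weightfn m n V (g j) = σ.pw V j := by
    intro j
    have h1 := hpos j
    rw [weightfn, Schedule.pw, hg]
    simp only
    rw [Nat.cast_sub (h1.2)]
    ring_nf
  have h1 : Finset.univ.val.map (σ.pw V) = (Finset.univ.val.map g).map (weightfn m n V) := by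
    rw [Multiset.map_map]
    congr 1
    funext j
    exact (hwg j).symm
  rw [h1]
  apply Multiset.map_le_map
  have : Finset.univ.val.map g = (Finset.univ.map ⟨g, hginj⟩).val := by
    rw [Finset.map_val]; rfl
  rw [this]
  exact Finset.val_le_iff.mpr (Finset.subset_univ _)

lemma lower_bound (p : Fin n → ℝ) (V : Fin m → ℝ)
    (hp : ∀ j, 0 < p j) (hV : ∀ i, 0 < V i) (hm : 0 < m) :
    ∀ σ : Schedule (Fin n) m,
      ∑ k ∈ Finset.range n,
        (sortedWeights m n V).getD k 0 * (sortedProcDesc p).getD k 0 ≤ σ.totalC p V := by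
  intro σ
  rw [σ.totalC_eq_sum_pw]
  set w := σ.pw V with hw
  set τ := Tuple.sort w with hτ
  set ρ := Tuple.sort p with hρ
  set g : Fin n → ℝ := fun k => p (ρ (Fin.rev k)) with hgdef
  have hganti : Antitone g := by
    intro a b hab
    exact (Tuple.monotone_sort p) (Fin.rev_le_rev.mpr hab)
  have hanti : Antivary (w ∘ τ) g := (Tuple.monotone_sort w).antivary hganti
  set π : Equiv.Perm (Fin n) := (τ.trans ρ.symm).trans Fin.revPerm with hπ
  have hre := hanti.sum_mul_le_sum_mul_comp_perm (σ := π)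
  have hπval : ∀ k, g (π k) = p (τ k) := by
    intro k
    rw [hgdef, hπ]
    simp [Fin.revPerm, Fin.rev_rev]
  have hRHS : ∑ k, (w ∘ τ) k * g (π k) = ∑ j, w j * p j := by
    rw [show ∑ k, (w ∘ τ) k * g (π k) = ∑ k, w (τ k) * p (τ k) from
      Finset.sum_congr rfl fun k _ => by rw [hπval k]; rfl]
    exact Equiv.sum_comp τ (fun j => w j * p j)
  have hLHS : ∑ k ∈ Finset.range n,
      (sortedWeights m n V).getD k 0 * (sortedProcDesc p).getD k 0
      ≤ ∑ k, (w ∘ τ) k * g k := by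
    rw [← Fin.sum_univ_eq_sum_range (fun k => (sortedWeights m n V).getD k 0
      * (sortedProcDesc p).getD k 0) n]
    apply Finset.sum_le_sum
    intro k _
    have hp' : (sortedProcDesc p).getD (k : ℕ) 0 = g k := by
      rw [sortedProcDesc_getD]
    have hsub : (((Finset.univ.val.map w).sort (· ≤ ·))).Sublist
        (((Finset.univ : Finset (Fin m × Fin n)).val.map (weightfn m n V)).sort (· ≤ ·)) := by
      apply List.sublist_of_subperm_of_pairwise (r := (· ≤ ·))
      · rw [← Multiset.coe_le, Multiset.sort_eq, Multiset.sort_eq]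
        exact pw_mult_le σ V
      · exact Multiset.pairwise_sort _ _
      · exact Multiset.pairwise_sort _ _
    have hwk : (sortedWeights m n V).getD (k : ℕ) 0 ≤ (w ∘ τ) k := by
      rw [sortedWeights_getD_eq]
      have h1 := getD_le_of_sublist hsub (Multiset.pairwise_sort _ _) (k : ℕ)
        (by rw [sort_length]; exact k.isLt)
      have h2 : ((Finset.univ.val.map w).sort (· ≤ ·)).getD (k : ℕ) 0 = w (τ k) :=
        sort_getD w k
      rw [h2] at h1
      exact h1
    have hgpos : 0 ≤ g k := le_of_lt (hp _)
    calc (sortedWeights m n V).getD (k : ℕ) 0 * (sortedProcDesc p).getD (k : ℕ) 0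
        = (sortedWeights m n V).getD (k : ℕ) 0 * g k := by rw [hp']
      _ ≤ (w ∘ τ) k * g k := mul_le_mul_of_nonneg_right hwk hgpos
  calc ∑ k ∈ Finset.range n,
      (sortedWeights m n V).getD k 0 * (sortedProcDesc p).getD k 0
      ≤ ∑ k, (w ∘ τ) k * g k := hLHS
    _ ≤ ∑ k, (w ∘ τ) k * g (π k) := hre
    _ = ∑ j, w j * p j := hRHS

lemma pairing_eq (p : Fin n → ℝ) (V : Fin m → ℝ)
    (hp : ∀ j, 0 < p j) (hV : ∀ i, 0 < V i) (hm : 0 < m) :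
    ∀ σ : Schedule (Fin n) m, ∀ e : Fin n ≃ Fin n,
      (∀ k : Fin n, p (e k) = (sortedProcDesc p).getD k 0) →
      (∀ k : Fin n, σ.pw V (e k) = (sortedWeights m n V).getD k 0) →
      σ.totalC p V = ∑ k ∈ Finset.range n,
        (sortedWeights m n V).getD k 0 * (sortedProcDesc p).getD k 0 := by
  intro σ e h1 h2
  rw [σ.totalC_eq_sum_pw, ← Equiv.sum_comp e (fun j => σ.pw V j * p j),
    ← Fin.sum_univ_eq_sum_range (fun k => (sortedWeights m n V).getD k 0
      * (sortedProcDesc p).getD k 0) n]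
  exact Finset.sum_congr rfl fun k _ => by rw [h1 k, h2 k]

lemma exists_optimal (p : Fin n → ℝ) (V : Fin m → ℝ)
    (hp : ∀ j, 0 < p j) (hV : ∀ i, 0 < V i) (hm : 0 < m) :
    ∃ σ : Schedule (Fin n) m, σ.totalC p V = ∑ k ∈ Finset.range n,
      (sortedWeights m n V).getD k 0 * (sortedProcDesc p).getD k 0 := by
  have hle : n ≤ m * n := Nat.le_mul_of_pos_left n hm
  set wt := wtfn m n V with hwt
  set τ := Tuple.sort wt with hτ
  set Q : Fin n → Fin m × Fin n := fun k => finProdFinEquiv.symm (τ (Fin.castLE hle k)) with hQ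
  have hQinj : Function.Injective Q := by
    intro a b hab
    rw [hQ] at hab
    have h1 := finProdFinEquiv.symm.injective hab
    have h2 := τ.injective h1
    exact Fin.castLE_inj.mp h2
  have hwtQ : ∀ k, wt (τ (Fin.castLE hle k)) = weightfn m n V (Q k) := by
    intro k; rw [hQ, hwt, wtfn]
  have hdown : ∀ (k : Fin n) (l' : Fin n), (l' : ℕ) < ((Q k).2 : ℕ) →
      ∃ k' : Fin n, Q k' = ((Q k).1, l') := by
    intro k l' hl
    set x := finProdFinEquiv ((Q k).1, l') with hx
    set k0 := τ.symm x with hk0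
    have hwx : wt x = weightfn m n V ((Q k).1, l') := by
      rw [hwt, wtfn, hx, Equiv.symm_apply_apply]
    have hlt : wt (τ k0) < wt (τ (Fin.castLE hle k)) := by
      rw [hk0, Equiv.apply_symm_apply, hwx, hwtQ]
      rw [weightfn, weightfn]
      simp only
      rw [div_lt_div_iff_of_pos_right (hV (Q k).1)]
      have : ((l' : ℕ) : ℝ) < (((Q k).2 : ℕ) : ℝ) := by exact_mod_cast hl
      linarith
    have hk0lt : (k0 : ℕ) < ((Fin.castLE hle k) : ℕ) := by
      by_contra hcon
      push_neg at hcon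
      have hmono := Tuple.monotone_sort wt (a := Fin.castLE hle k) (b := k0)
        (by rw [Fin.le_def]; exact hcon)
      rw [← hτ] at hmono
      have : wt (τ (Fin.castLE hle k)) ≤ wt (τ k0) := hmono
      linarith
    have hk'lt : (k0 : ℕ) < n := lt_of_lt_of_le hk0lt (by simpa using k.isLt.le)
    have hcast : Fin.castLE hle ⟨(k0 : ℕ), hk'lt⟩ = k0 := by
      apply Fin.ext; simp
    refine ⟨⟨(k0 : ℕ), hk'lt⟩, ?_⟩
    show finProdFinEquiv.symm (τ (Fin.castLE hle ⟨(k0 : ℕ), hk'lt⟩)) = ((Q k).1, l')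
    rw [hcast, hk0, Equiv.apply_symm_apply, hx, Equiv.symm_apply_apply]
  set η : Fin m → ℕ := fun i => (Finset.univ.filter fun k : Fin n => (Q k).1 = i).card with hη
  have hSinj : ∀ i : Fin m, Set.InjOn (fun k => ((Q k).2 : ℕ))
      (Finset.univ.filter fun k : Fin n => (Q k).1 = i) := by
    intro i a ha b hb hab
    simp only [coe_filter, Set.mem_setOf_eq] at ha hb
    apply hQinj
    have : (Q a).2 = (Q b).2 := Fin.ext hab
    rw [Prod.ext_iff]
    exact ⟨ha.2.trans hb.2.symm, this⟩
  have hS : ∀ i : Fin m, (Finset.univ.filter fun k : Fin n => (Q k).1 = i).image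
      (fun k => ((Q k).2 : ℕ)) = Finset.range (η i) := by
    intro i
    have hcard : ((Finset.univ.filter fun k : Fin n => (Q k).1 = i).image
        (fun k => ((Q k).2 : ℕ))).card = η i := Finset.card_image_of_injOn (hSinj i)
    rw [← hcard]
    apply downward_eq_range
    intro a ha b hb
    simp only [Finset.mem_image, Finset.mem_filter, Finset.mem_univ, true_and] at ha ⊢
    obtain ⟨k, hk1, hk2⟩ := ha
    have hbn : b < n := by
      have := ((Q k).2).isLt
      omega
    obtain ⟨k', hk'⟩ := hdown k ⟨b, hbn⟩ (by rw [hk2]; exact hb)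
    refine ⟨k', ?_, ?_⟩
    · rw [hk', hk1]
    · rw [hk']
  have hmem : ∀ k : Fin n, ((Q k).2 : ℕ) < η ((Q k).1) := by
    intro k
    have : ((Q k).2 : ℕ) ∈ Finset.range (η ((Q k).1)) := by
      rw [← hS]
      exact Finset.mem_image_of_mem _ (by simp)
    simpa using this
  have hmem' : ∀ (i : Fin m) (b : ℕ), b < η i → ∃ k : Fin n, (Q k).1 = i ∧ ((Q k).2 : ℕ) = b := by
    intro i b hb
    have : b ∈ (Finset.univ.filter fun k : Fin n => (Q k).1 = i).image
        (fun k => ((Q k).2 : ℕ)) := by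
      rw [hS]; simpa using hb
    simp only [Finset.mem_image, Finset.mem_filter, Finset.mem_univ, true_and] at this
    obtain ⟨k, hk1, hk2⟩ := this
    exact ⟨k, hk1, hk2⟩
  set e : Fin n ≃ Fin n := Fin.revPerm.trans (Tuple.sort p) with he
  set σ : Schedule (Fin n) m :=
    { mach := fun j => (Q (e.symm j)).1
      pos := fun j => η ((Q (e.symm j)).1) - ((Q (e.symm j)).2 : ℕ)
      pos_pos := fun j => by
        have := hmem (e.symm j)
        show 1 ≤ η ((Q (e.symm j)).1) - ((Q (e.symm j)).2 : ℕ)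
        omega
      inj := by
        intro j j' hmach hpos
        have h1 := hmem (e.symm j)
        have h2 := hmem (e.symm j')
        rw [hmach] at hpos h1
        have hl : ((Q (e.symm j)).2 : ℕ) = ((Q (e.symm j')).2 : ℕ) := by omega
        have : Q (e.symm j) = Q (e.symm j') := by
          rw [Prod.ext_iff]
          exact ⟨hmach, Fin.ext hl⟩
        have := hQinj this
        exact e.symm.injective this
      contiguous := by
        intro j hj
        have h1 := hmem (e.symm j)
        have hj' : 2 ≤ η ((Q (e.symm j)).1) - ((Q (e.symm j)).2 : ℕ) := hj
        obtain ⟨k, hk1, hk2⟩ := hmem' ((Q (e.symm j)).1) (((Q (e.symm j)).2 : ℕ) + 1) (by omega)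
        refine ⟨e k, ?_, ?_⟩
        · show (Q (e.symm (e k))).1 = (Q (e.symm j)).1
          rw [e.symm_apply_apply, hk1]
        · show η ((Q (e.symm (e k))).1) - ((Q (e.symm (e k))).2 : ℕ)
            = η ((Q (e.symm j)).1) - ((Q (e.symm j)).2 : ℕ) - 1
          rw [e.symm_apply_apply, hk1, hk2]
          omega } with hσ
  have hload : ∀ i, σ.load i = η i := by
    intro i
    rw [Schedule.load]
    apply Finset.card_bij' (fun j _ => e.symm j) (fun k _ => e k)
    · intro j hj
      simp only [Finset.mem_filter, Finset.mem_univ, true_and] at hj ⊢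
      exact hj
    · intro k hk
      simp only [Finset.mem_filter, Finset.mem_univ, true_and] at hk ⊢
      show (Q (e.symm (e k))).1 = _
      rw [e.symm_apply_apply]
      exact hk
    · intro j _; exact e.apply_symm_apply j
    · intro k _; exact e.symm_apply_apply k
  have hpp : ∀ k : Fin n, p (e k) = (sortedProcDesc p).getD k 0 := by
    intro k
    rw [sortedProcDesc_getD, he]
    rfl
  have hpw : ∀ k : Fin n, σ.pw V (e k) = (sortedWeights m n V).getD k 0 := by
    intro k
    rw [Schedule.pw, sortedWeights_getD_wt V hm k]
    have h0 : (Fin.castLE (Nat.le_mul_of_pos_left n hm) k) = (Fin.castLE hle k) := rfl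
    rw [h0, ← hwt, hwtQ, weightfn]
    have hQe : Q (e.symm (e k)) = Q k := by rw [e.symm_apply_apply]
    have hmach : σ.mach (e k) = (Q k).1 := by
      show (Q (e.symm (e k))).1 = (Q k).1
      rw [hQe]
    have hposk : σ.pos (e k) = η ((Q k).1) - ((Q k).2 : ℕ) := by
      show η ((Q (e.symm (e k))).1) - ((Q (e.symm (e k))).2 : ℕ) = _
      rw [hQe]
    have h1 := hmem k
    rw [hmach, hposk, hload]
    rw [Nat.cast_sub (le_of_lt h1)]
    push_cast
    ring_nf
  exact ⟨σ, pairing_eq p V hp hV hm σ e hpp hpw⟩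

end Main

/-- The minimum of `Σ_j C_j` over all schedules of `n` jobs on `m`
uniform machines equals `Σ_{k=1}^n ω_(k)·p_(k)` (smallest positional weights paired with
largest processing times), and this minimum is attained by any schedule assigning the
job with the `k`-th largest processing time to a position of positional weight `ω_(k)`. -/
theorem min_total_completion_eq_pairing
    {m n : ℕ} (p : Fin n → ℝ) (V : Fin m → ℝ)
    (hp : ∀ j, 0 < p j) (hV : ∀ i, 0 < V i) (hm : 0 < m) :
    (∃ σ : Schedule (Fin n) m, σ.totalC p V =
        ∑ k ∈ Finset.range n,
          (sortedWeights m n V).getD k 0 * (sortedProcDesc p).getD k 0) ∧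
    (∀ σ : Schedule (Fin n) m,
        ∑ k ∈ Finset.range n,
          (sortedWeights m n V).getD k 0 * (sortedProcDesc p).getD k 0
          ≤ σ.totalC p V) ∧
    (∀ σ : Schedule (Fin n) m, ∀ e : Fin n ≃ Fin n,
        (∀ k : Fin n, p (e k) = (sortedProcDesc p).getD k 0) →
        (∀ k : Fin n, σ.pw V (e k) = (sortedWeights m n V).getD k 0) →
        σ.totalC p V =
          ∑ k ∈ Finset.range n,
            (sortedWeights m n V).getD k 0 * (sortedProcDesc p).getD k 0) := by
  refine ⟨exists_optimal p V hp hV hm, lower_bound p V hp hV hm, pairing_eq p V hp hV hm⟩
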